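/- arXiv:1504.05978 — 2 statements merged into one kernel-verified Lean document; each statement's English description precedes it below -/
import Mathlib

section
/- Uniform Gronwall lemma: Let τ > 0 be fixed. Suppose Y : [0,∞) → ℝ is nonnegative and locally absolutely continuous (so Y(t) = Y(0) + ∫₀ᵗ Y′(s) ds, where Y′ denotes its almost-everywhere derivative), and suppose β : [0,∞) → ℝ is locally integrable with Y′(t) + β(t)·Y(t) ≤ 0 for almost every t ≥ 0. Assume there is γ > 0 such that liminf_{t→∞} ∫_t^{t+τ} β(s) ds ≥ γ, and that limsup_{t→∞} ∫_t^{t+τ} β⁻(s) ds < ∞, where β⁻(s) = max{−β(s), 0}. Then Y(t) → 0 at an exponential rate as t → ∞; that is, there exist constants C > 0, α > 0 and T ≥ 0 such that Y(t) ≤ C·exp(−α t) for all t ≥ T. -/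
open MeasureTheory Filter

/-- The primitive `u ↦ ∫_{(a,u]} g` is continuous on `[a,b]`. -/
lemma ug_prim_contOn {a b : ℝ} {g : ℝ → ℝ} (hg : IntegrableOn g (Set.Ioc a b)) :
    ContinuousOn (fun u => ∫ v in Set.Ioc a u, g v) (Set.Icc a b) := by
  rcases le_or_gt a b with hab | hab
  · exact intervalIntegral.continuousOn_primitive
      ((integrableOn_Icc_iff_integrableOn_Ioc).2 hg)
  · rw [Set.Icc_eq_empty (not_le.2 hab)]
    exact continuousOn_empty _

/-- Boundedness of the primitive. -/
lemma ug_prim_bdd {a b : ℝ} {g : ℝ → ℝ} (hg : IntegrableOn g (Set.Ioc a b)) :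
    ∀ u ∈ Set.Icc a b, ‖∫ v in Set.Ioc a u, g v‖ ≤ ∫ v in Set.Ioc a b, ‖g v‖ := by
  intro u hu
  calc ‖∫ v in Set.Ioc a u, g v‖ ≤ ∫ v in Set.Ioc a u, ‖g v‖ :=
        norm_integral_le_integral_norm _
    _ ≤ ∫ v in Set.Ioc a b, ‖g v‖ := by
        apply setIntegral_mono_set hg.norm
        · filter_upwards with x using norm_nonneg _
        · exact HasSubset.Subset.eventuallyLE (Set.Ioc_subset_Ioc le_rfl hu.2)

lemma ug_mul_prim_integrable {a b : ℝ} {f g : ℝ → ℝ}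
    (hf : IntegrableOn f (Set.Ioc a b)) (hg : IntegrableOn g (Set.Ioc a b)) :
    IntegrableOn (fun u => f u * ∫ v in Set.Ioc a u, g v) (Set.Ioc a b) := by
  have hm : AEStronglyMeasurable (fun u => ∫ v in Set.Ioc a u, g v)
      (volume.restrict (Set.Ioc a b)) := by
    refine AEStronglyMeasurable.mono_measure ?_
      (Measure.restrict_mono Set.Ioc_subset_Icc_self le_rfl)
    exact (ug_prim_contOn hg).aestronglyMeasurable measurableSet_Icc
  have hb : ∀ᵐ u ∂(volume.restrict (Set.Ioc a b)),
      ‖∫ v in Set.Ioc a u, g v‖ ≤ ∫ v in Set.Ioc a b, ‖g v‖ := by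
    filter_upwards [ae_restrict_mem measurableSet_Ioc] with u hu
    exact ug_prim_bdd hg u (Set.Ioc_subset_Icc_self hu)
  exact (hf.bdd_mul hm hb).congr (by filter_upwards with u using mul_comm _ _)

lemma ug_fubini {a b : ℝ} {f g : ℝ → ℝ}
    (hf : IntegrableOn f (Set.Ioc a b)) (hg : IntegrableOn g (Set.Ioc a b)) :
    (∫ u in Set.Ioc a b, f u * ∫ v in Set.Ioc a u, g v)
      + ∫ v in Set.Ioc a b, g v * ∫ u in Set.Ioc a v, f u
      = (∫ u in Set.Ioc a b, f u) * ∫ v in Set.Ioc a b, g v := by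
  set μ := volume.restrict (Set.Ioc a b) with hμ
  set K : ℝ → ℝ → ℝ := fun u v => if u < v then f u * g v else 0 with hK
  have hKint : Integrable (Function.uncurry K) (μ.prod μ) := by
    have : Function.uncurry K
        = Set.indicator {p : ℝ × ℝ | p.1 < p.2} (fun p => f p.1 * g p.2) := by
      funext p
      by_cases h : p.1 < p.2 <;>
        simp [Function.uncurry, hK, h, Set.indicator_of_mem, Set.indicator_of_notMem,
          Set.mem_setOf_eq]
    rw [this]
    exact (hf.mul_prod hg).indicator (measurableSet_lt measurable_fst measurable_snd)
  have hswap : (∫ u, (∫ v, K u v ∂μ) ∂μ) = ∫ v, (∫ u, K u v ∂μ) ∂μ :=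
    integral_integral_swap hKint
  -- left side of swap: ∫ f u * (∫_{Ioc a b} g - ∫_{Ioc a u} g)
  have hL : (∫ u, (∫ v, K u v ∂μ) ∂μ)
      = ∫ u in Set.Ioc a b, f u * ((∫ v in Set.Ioc a b, g v) - ∫ v in Set.Ioc a u, g v) := by
    apply setIntegral_congr_fun measurableSet_Ioc
    intro u hu
    dsimp only
    have h1 : (∫ v, K u v ∂μ) = ∫ v in Set.Ioc a b ∩ Set.Ioi u, f u * g v := by
      rw [hμ, ← setIntegral_indicator measurableSet_Ioi]
      apply setIntegral_congr_fun measurableSet_Ioc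
      intro v _
      by_cases h : u < v <;>
        simp [hK, h, Set.indicator_of_mem, Set.indicator_of_notMem, Set.mem_Ioi]
    have h2 : Set.Ioc a b ∩ Set.Ioi u = Set.Ioc u b := by
      ext v; constructor
      · rintro ⟨⟨_, hv2⟩, hv3⟩; exact ⟨hv3, hv2⟩
      · rintro ⟨hv1, hv2⟩; exact ⟨⟨lt_trans hu.1 hv1, hv2⟩, hv1⟩
    have h3 : (∫ v in Set.Ioc a u, g v) + ∫ v in Set.Ioc u b, g v
        = ∫ v in Set.Ioc a b, g v := by
      rw [← setIntegral_union (Set.Ioc_disjoint_Ioc_of_le le_rfl) measurableSet_Ioc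
        (hg.mono (Set.Ioc_subset_Ioc le_rfl hu.2) le_rfl)
        (hg.mono (Set.Ioc_subset_Ioc (le_of_lt hu.1) le_rfl) le_rfl),
        Set.Ioc_union_Ioc_eq_Ioc (le_of_lt hu.1) hu.2]
    rw [h1, h2, integral_const_mul]
    rw [show (∫ v in Set.Ioc u b, g v) = (∫ v in Set.Ioc a b, g v) - ∫ v in Set.Ioc a u, g v by
      linarith [h3]]
  -- right side of swap: ∫ g v * ∫_{Ioc a v} f
  have hR : (∫ v, (∫ u, K u v ∂μ) ∂μ)
      = ∫ v in Set.Ioc a b, g v * ∫ u in Set.Ioc a v, f u := by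
    apply setIntegral_congr_fun measurableSet_Ioc
    intro v hv
    dsimp only
    have h1 : (∫ u, K u v ∂μ) = ∫ u in Set.Ioc a b ∩ Set.Iio v, f u * g v := by
      rw [hμ, ← setIntegral_indicator measurableSet_Iio]
      apply setIntegral_congr_fun measurableSet_Ioc
      intro u _
      by_cases h : u < v <;>
        simp [hK, h, Set.indicator_of_mem, Set.indicator_of_notMem, Set.mem_Iio]
    have h2 : Set.Ioc a b ∩ Set.Iio v = Set.Ioo a v := by
      ext u; constructor
      · rintro ⟨⟨hu1, _⟩, hu3⟩; exact ⟨hu1, hu3⟩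
      · rintro ⟨hu1, hu2⟩; exact ⟨⟨hu1, le_trans (le_of_lt hu2) hv.2⟩, hu2⟩
    rw [h1, h2, ← integral_Ioc_eq_integral_Ioo, integral_mul_const, mul_comm]
  -- expand hL
  have hfq := ug_mul_prim_integrable hf hg
  have hfc : IntegrableOn (fun u => f u * ∫ v in Set.Ioc a b, g v) (Set.Ioc a b) :=
    hf.mul_const _
  have hL2 : (∫ u in Set.Ioc a b, f u * ((∫ v in Set.Ioc a b, g v) - ∫ v in Set.Ioc a u, g v))
      = (∫ u in Set.Ioc a b, f u) * (∫ v in Set.Ioc a b, g v)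
        - ∫ u in Set.Ioc a b, f u * ∫ v in Set.Ioc a u, g v := by
    have : (fun u => f u * ((∫ v in Set.Ioc a b, g v) - ∫ v in Set.Ioc a u, g v))
        = fun u => f u * (∫ v in Set.Ioc a b, g v) - f u * ∫ v in Set.Ioc a u, g v := by
      funext u; ring
    rw [this, integral_sub hfc hfq, integral_mul_const]
  rw [hL, hR, hL2] at hswap
  linarith [hswap]

/-- Product rule for functions given in integral (absolutely continuous) form. -/
lemma ug_prod_rule {a b : ℝ} {F G f g : ℝ → ℝ}
    (hf : IntegrableOn f (Set.Ioc a b)) (hg : IntegrableOn g (Set.Ioc a b))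
    (hF : ∀ t ∈ Set.Icc a b, F t = F a + ∫ u in Set.Ioc a t, f u)
    (hG : ∀ t ∈ Set.Icc a b, G t = G a + ∫ v in Set.Ioc a t, g v) :
    ∀ t ∈ Set.Icc a b, F t * G t = F a * G a
      + ∫ u in Set.Ioc a t, (f u * G u + F u * g u) := by
  intro t ht
  have hsub : Set.Ioc a t ⊆ Set.Ioc a b := Set.Ioc_subset_Ioc le_rfl ht.2
  have hf' : IntegrableOn f (Set.Ioc a t) := hf.mono hsub le_rfl
  have hg' : IntegrableOn g (Set.Ioc a t) := hg.mono hsub le_rfl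
  have hfq := ug_mul_prim_integrable hf' hg'
  have hgp := ug_mul_prim_integrable hg' hf'
  have hsplit : (∫ u in Set.Ioc a t, (f u * G u + F u * g u))
      = (∫ u in Set.Ioc a t, (f u * (G a + ∫ v in Set.Ioc a u, g v)
          + (F a + ∫ v in Set.Ioc a u, f v) * g u)) := by
    apply setIntegral_congr_fun measurableSet_Ioc
    intro u hu
    dsimp only
    have hu' : u ∈ Set.Icc a b := ⟨le_of_lt hu.1, le_trans hu.2 ht.2⟩
    rw [← hF u hu', ← hG u hu']
  have e1 : (fun u => f u * (G a + ∫ v in Set.Ioc a u, g v)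
        + (F a + ∫ v in Set.Ioc a u, f v) * g u)
      = fun u => (f u * G a + g u * F a)
        + (f u * ∫ v in Set.Ioc a u, g v) + (g u * ∫ v in Set.Ioc a u, f v) := by
    funext u; ring
  have hint1 : IntegrableOn (fun u => f u * G a + g u * F a) (Set.Ioc a t) :=
    (hf'.mul_const _).add (hg'.mul_const _)
  have hfub := ug_fubini hf' hg'
  have hA := integral_add (μ := volume.restrict (Set.Ioc a t)) (hint1.add hfq) hgp
  have hB := integral_add (μ := volume.restrict (Set.Ioc a t)) hint1 hfq
  have hC := integral_add (μ := volume.restrict (Set.Ioc a t))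
    (hf'.mul_const (G a)) (hg'.mul_const (F a))
  simp only [Pi.add_apply] at hA
  beta_reduce at hA hB hC
  simp only [integral_mul_const] at hC
  rw [hsplit, e1, hF t ht, hG t ht]
  have hexp : (F a + ∫ u in Set.Ioc a t, f u) * (G a + ∫ v in Set.Ioc a t, g v)
      = F a * G a + (∫ u in Set.Ioc a t, f u) * G a + (∫ v in Set.Ioc a t, g v) * F a
        + (∫ u in Set.Ioc a t, f u) * ∫ v in Set.Ioc a t, g v := by ring
  linarith [hexp, hfub, hA, hB, hC]

/-- Continuity of an AC function on `[a,b]`. -/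
lemma ug_contOn {a b : ℝ} {B β : ℝ → ℝ}
    (hβ : IntegrableOn β (Set.Ioc a b))
    (hB : ∀ t ∈ Set.Icc a b, B t = B a + ∫ u in Set.Ioc a t, β u) :
    ContinuousOn B (Set.Icc a b) := by
  have : ContinuousOn (fun t => B a + ∫ u in Set.Ioc a t, β u) (Set.Icc a b) :=
    (continuousOn_const).add (ug_prim_contOn hβ)
  exact ContinuousOn.congr this hB

lemma ug_bddOn {a b : ℝ} {B β : ℝ → ℝ}
    (hβ : IntegrableOn β (Set.Ioc a b))
    (hB : ∀ t ∈ Set.Icc a b, B t = B a + ∫ u in Set.Ioc a t, β u) :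
    ∃ Cb : ℝ, 0 ≤ Cb ∧ ∀ u ∈ Set.Icc a b, |B u| ≤ Cb := by
  obtain ⟨Cb, hCb⟩ := (isCompact_Icc.image_of_continuousOn
    ((ug_contOn hβ hB).norm)).bddAbove
  refine ⟨max Cb 0, le_max_right _ _, fun u hu => ?_⟩
  have := hCb (Set.mem_image_of_mem _ hu)
  exact le_trans this (le_max_left _ _)

/-- Integrability of `β ⬝ Bⁿ` type products. -/
lemma ug_mul_bdd_integrable {a b : ℝ} {β h : ℝ → ℝ} {c : ℝ}
    (hβ : IntegrableOn β (Set.Ioc a b))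
    (hh : ContinuousOn h (Set.Icc a b))
    (hc : ∀ u ∈ Set.Icc a b, |h u| ≤ c) :
    IntegrableOn (fun u => β u * h u) (Set.Ioc a b) := by
  have hm : AEStronglyMeasurable h (volume.restrict (Set.Ioc a b)) :=
    (hh.aestronglyMeasurable measurableSet_Icc).mono_measure
      (Measure.restrict_mono Set.Ioc_subset_Icc_self le_rfl)
  have hb : ∀ᵐ u ∂(volume.restrict (Set.Ioc a b)), ‖h u‖ ≤ c := by
    filter_upwards [ae_restrict_mem measurableSet_Ioc] with u hu
    exact hc u (Set.Ioc_subset_Icc_self hu)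
  exact (hβ.bdd_mul hm hb).congr (by filter_upwards with u using mul_comm _ _)

/-- Chain rule for powers of an AC function. -/
lemma ug_pow_rule {a b : ℝ} {B β : ℝ → ℝ}
    (hβ : IntegrableOn β (Set.Ioc a b))
    (hB : ∀ t ∈ Set.Icc a b, B t = B a + ∫ u in Set.Ioc a t, β u) :
    ∀ n : ℕ, ∀ t ∈ Set.Icc a b,
      B t ^ (n + 1) = B a ^ (n + 1)
        + ∫ u in Set.Ioc a t, ((n : ℝ) + 1) * β u * B u ^ n := by
  have hcont := ug_contOn hβ hB
  obtain ⟨Cb, hCb0, hCb⟩ := ug_bddOn hβ hB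
  have hint : ∀ n : ℕ, IntegrableOn
      (fun u => ((n : ℝ) + 1) * β u * B u ^ n) (Set.Ioc a b) := by
    intro n
    have h1 : IntegrableOn (fun u => β u * B u ^ n) (Set.Ioc a b) := by
      refine ug_mul_bdd_integrable hβ (hcont.pow n) (c := Cb ^ n) fun u hu => ?_
      rw [abs_pow]
      exact pow_le_pow_left₀ (abs_nonneg _) (hCb u hu) n
    have := h1.const_mul ((n : ℝ) + 1)
    exact this.congr (by filter_upwards with u using by ring)
  intro n
  induction n with
  | zero =>
    intro t ht
    have h0 : (∫ u in Set.Ioc a t, (((0:ℕ) : ℝ) + 1) * β u * B u ^ 0)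
        = ∫ u in Set.Ioc a t, β u := by
      apply setIntegral_congr_fun measurableSet_Ioc
      intro u _; dsimp only; norm_num
    rw [pow_one, pow_one, h0]
    exact hB t ht
  | succ n ih =>
    intro t ht
    have hprod := ug_prod_rule hβ (hint n) hB
      (fun t ht => by
        have := ih t ht
        push_cast at this ⊢
        convert this using 2) t ht
    have hintg : (∫ u in Set.Ioc a t,
          (β u * B u ^ (n + 1) + B u * (((n : ℝ) + 1) * β u * B u ^ n)))
        = ∫ u in Set.Ioc a t, ((n : ℝ) + 1 + 1) * β u * B u ^ (n + 1) := by
      apply setIntegral_congr_fun measurableSet_Ioc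
      intro u _
      dsimp only
      ring
    calc B t ^ (n + 1 + 1) = B t * B t ^ (n + 1) := by ring
      _ = B a * B a ^ (n + 1) + ∫ u in Set.Ioc a t,
            (β u * B u ^ (n + 1) + B u * (((n : ℝ) + 1) * β u * B u ^ n)) := hprod
      _ = B a ^ (n + 1 + 1) + ∫ u in Set.Ioc a t,
            ((n : ℝ) + 1 + 1) * β u * B u ^ (n + 1) := by rw [hintg]; congr 1; ring
      _ = B a ^ (n + 1 + 1) + ∫ u in Set.Ioc a t,
            (((n + 1 : ℕ) : ℝ) + 1) * β u * B u ^ (n + 1) := by norm_cast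

lemma ug_exp_shift (x : ℝ) :
    HasSum (fun n : ℕ => x ^ (n + 1) / (Nat.factorial (n + 1) : ℝ)) (Real.exp x - 1) := by
  have h : HasSum (fun n : ℕ => x ^ n / (Nat.factorial n : ℝ)) (Real.exp x) := by
    rw [Real.exp_eq_exp_ℝ]
    exact NormedSpace.expSeries_div_hasSum_exp x
  have h2 : HasSum (fun n : ℕ => x ^ n / (Nat.factorial n : ℝ))
      ((Real.exp x - 1) + ∑ i ∈ Finset.range 1, x ^ i / (Nat.factorial i : ℝ)) := by
    simpa using h
  exact (hasSum_nat_add_iff (f := fun n : ℕ => x ^ n / (Nat.factorial n : ℝ)) 1).2 h2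

/-- Chain rule for `exp` of an AC function. -/
lemma ug_exp_rule {a b : ℝ} {B β : ℝ → ℝ}
    (hβ : IntegrableOn β (Set.Ioc a b))
    (hB : ∀ t ∈ Set.Icc a b, B t = B a + ∫ u in Set.Ioc a t, β u) :
    ∀ t ∈ Set.Icc a b, Real.exp (B t)
      = Real.exp (B a) + ∫ u in Set.Ioc a t, β u * Real.exp (B u) := by
  intro t ht
  have hcont := ug_contOn hβ hB
  obtain ⟨Cb, hCb0, hCb⟩ := ug_bddOn hβ hB
  set μ := volume.restrict (Set.Ioc a t) with hμ
  have hsub : Set.Ioc a t ⊆ Set.Ioc a b := Set.Ioc_subset_Ioc le_rfl ht.2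
  have hsub2 : Set.Ioc a t ⊆ Set.Icc a b :=
    fun u hu => ⟨le_of_lt hu.1, le_trans hu.2 ht.2⟩
  have hβ' : IntegrableOn β (Set.Ioc a t) := hβ.mono hsub le_rfl
  have hmeasB : AEStronglyMeasurable B μ := by
    refine (hcont.aestronglyMeasurable measurableSet_Icc).mono_measure
      (Measure.restrict_mono hsub2 le_rfl)
  have hmeas : ∀ n : ℕ, AEStronglyMeasurable
      (fun u => β u * B u ^ n / (Nat.factorial n : ℝ)) μ :=
    fun n => ((hβ'.1.aemeasurable.mul
      (hmeasB.aemeasurable.pow_const n)).div_const _).aestronglyMeasurable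
  have h_bound : ∀ n : ℕ, ∀ᵐ u ∂μ,
      ‖β u * B u ^ n / (Nat.factorial n : ℝ)‖ ≤ |β u| * (Cb ^ n / (Nat.factorial n : ℝ)) := by
    intro n
    filter_upwards [ae_restrict_mem measurableSet_Ioc] with u hu
    have hBu := hCb u (hsub2 hu)
    have h1 : |B u ^ n| ≤ Cb ^ n := by
      rw [abs_pow]; exact pow_le_pow_left₀ (abs_nonneg _) hBu n
    have hfac : (0:ℝ) < (Nat.factorial n : ℝ) := by positivity
    rw [Real.norm_eq_abs, abs_div, abs_mul, abs_of_pos hfac, mul_div_assoc]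
    gcongr
  have bound_summable : ∀ᵐ u ∂μ, Summable fun n : ℕ => |β u| * (Cb ^ n / (Nat.factorial n : ℝ)) := by
    filter_upwards with u
    exact (Real.summable_pow_div_factorial Cb).mul_left _
  have bound_integrable : Integrable
      (fun u => ∑' n : ℕ, |β u| * (Cb ^ n / (Nat.factorial n : ℝ))) μ := by
    have : (fun u => ∑' n : ℕ, |β u| * (Cb ^ n / (Nat.factorial n : ℝ)))
        = fun u => |β u| * Real.exp Cb := by
      funext u
      rw [tsum_mul_left]
      congr 1
      rw [Real.exp_eq_exp_ℝ]
      exact (NormedSpace.expSeries_div_hasSum_exp Cb).tsum_eq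
    rw [this]
    exact hβ'.abs.mul_const _
  have h_lim : ∀ᵐ u ∂μ, HasSum
      (fun n : ℕ => β u * B u ^ n / (Nat.factorial n : ℝ)) (β u * Real.exp (B u)) := by
    filter_upwards with u
    have h : HasSum (fun n : ℕ => B u ^ n / (Nat.factorial n : ℝ)) (Real.exp (B u)) := by
      rw [Real.exp_eq_exp_ℝ]
      exact NormedSpace.expSeries_div_hasSum_exp (B u)
    have := h.mul_left (β u)
    simpa [mul_div_assoc] using this
  have HS1 : HasSum (fun n : ℕ => ∫ u, β u * B u ^ n / (Nat.factorial n : ℝ) ∂μ)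
      (∫ u, β u * Real.exp (B u) ∂μ) :=
    hasSum_integral_of_dominated_convergence _ hmeas h_bound bound_summable
      bound_integrable h_lim
  have hIn : ∀ n : ℕ, (∫ u, β u * B u ^ n / (Nat.factorial n : ℝ) ∂μ)
      = (B t ^ (n + 1) - B a ^ (n + 1)) / ((Nat.factorial (n + 1)) : ℝ) := by
    intro n
    have h1 := ug_pow_rule hβ hB n t ht
    have h2 : (∫ u, β u * B u ^ n / (Nat.factorial n : ℝ) ∂μ)
        = (1 / (((n : ℝ) + 1) * (Nat.factorial n : ℝ)))
          * ∫ u, ((n : ℝ) + 1) * β u * B u ^ n ∂μ := by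
      rw [← integral_const_mul]
      apply integral_congr_ae
      filter_upwards with u
      have hfac : (Nat.factorial n : ℝ) ≠ 0 := by positivity
      field_simp
    rw [h2, show (∫ u, ((n : ℝ) + 1) * β u * B u ^ n ∂μ)
        = B t ^ (n + 1) - B a ^ (n + 1) by rw [hμ]; linarith [h1]]
    rw [Nat.factorial_succ]
    have hfac : (Nat.factorial n : ℝ) ≠ 0 := by positivity
    push_cast
    field_simp
  have HS2 : HasSum (fun n : ℕ => (B t ^ (n + 1) - B a ^ (n + 1)) / ((Nat.factorial (n + 1)) : ℝ))
      (Real.exp (B t) - Real.exp (B a)) := by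
    have := (ug_exp_shift (B t)).sub (ug_exp_shift (B a))
    have he : (fun n : ℕ => B t ^ (n+1) / (Nat.factorial (n + 1) : ℝ)
          - B a ^ (n+1) / (Nat.factorial (n + 1) : ℝ))
        = fun n : ℕ => (B t ^ (n + 1) - B a ^ (n + 1)) / ((Nat.factorial (n + 1)) : ℝ) := by
      funext n; rw [div_sub_div_same]
    rw [he] at this
    simpa using this
  have HS1' : HasSum (fun n : ℕ => (B t ^ (n + 1) - B a ^ (n + 1)) / ((Nat.factorial (n + 1)) : ℝ))
      (∫ u, β u * Real.exp (B u) ∂μ) := by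
    have he : (fun n : ℕ => ∫ u, β u * B u ^ n / (Nat.factorial n : ℝ) ∂μ)
        = fun n : ℕ => (B t ^ (n + 1) - B a ^ (n + 1)) / ((Nat.factorial (n + 1)) : ℝ) := by
      funext n; exact hIn n
    rwa [he] at HS1
  have := HS2.unique HS1'
  rw [hμ] at this
  linarith [this]

/-- Uniform Gronwall lemma (Lemma 2.4): if `Y ≥ 0` is locally absolutely
continuous with a.e. derivative `Y'` satisfying `Y' + β Y ≤ 0` a.e. on
`(0, ∞)`, where `β` is locally integrable,
`liminf_{t→∞} ∫_t^{t+τ} β ≥ γ > 0` and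
`limsup_{t→∞} ∫_t^{t+τ} β⁻ < ∞`, then `Y(t) → 0` at an exponential rate. -/
theorem uniform_gronwall
    (τ : ℝ) (hτ : 0 < τ)
    (Y Y' β : ℝ → ℝ)
    (hYnonneg : ∀ t : ℝ, 0 ≤ t → 0 ≤ Y t)
    (hY'loc : ∀ T : ℝ, IntegrableOn Y' (Set.Icc 0 T))
    (hYac : ∀ t : ℝ, 0 ≤ t → Y t = Y 0 + ∫ s in (0 : ℝ)..t, Y' s)
    (hβloc : ∀ T : ℝ, IntegrableOn β (Set.Icc 0 T))
    (hODE : ∀ᵐ t : ℝ, 0 ≤ t → Y' t + β t * Y t ≤ 0)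
    (γ : ℝ) (hγ : 0 < γ)
    (hliminf : ∀ ε : ℝ, 0 < ε →
      ∀ᶠ t in atTop, γ - ε ≤ ∫ s in t..(t + τ), β s)
    (hlimsup : ∃ M : ℝ, ∀ᶠ t in atTop,
      (∫ s in t..(t + τ), max (-β s) 0) ≤ M) :
    ∃ C : ℝ, 0 < C ∧ ∃ α : ℝ, 0 < α ∧ ∃ T : ℝ, 0 ≤ T ∧
      ∀ t : ℝ, T ≤ t → Y t ≤ C * Real.exp (-α * t) := by
  -- integrability on positive intervals
  have hβI : ∀ {s t : ℝ}, 0 ≤ s → IntegrableOn β (Set.Ioc s t) := by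
    intro s t hs
    exact (hβloc t).mono (fun u hu => ⟨le_trans hs (le_of_lt hu.1), hu.2⟩) le_rfl
  have hY'I : ∀ {s t : ℝ}, 0 ≤ s → IntegrableOn Y' (Set.Ioc s t) := by
    intro s t hs
    exact (hY'loc t).mono (fun u hu => ⟨le_trans hs (le_of_lt hu.1), hu.2⟩) le_rfl
  set B : ℝ → ℝ := fun r => ∫ u in Set.Ioc 0 r, β u with hBdef
  have hsplit0 : ∀ s t : ℝ, 0 ≤ s → s ≤ t →
      (∫ u in Set.Ioc 0 t, β u)
        = (∫ u in Set.Ioc 0 s, β u) + ∫ u in Set.Ioc s t, β u := by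
    intro s t hs hst
    rw [← setIntegral_union (Set.Ioc_disjoint_Ioc_of_le le_rfl) measurableSet_Ioc
      (hβI le_rfl) (hβI hs), Set.Ioc_union_Ioc_eq_Ioc hs hst]
  have hBadd : ∀ s t : ℝ, 0 ≤ s → s ≤ t →
      B t = B s + ∫ u in Set.Ioc s t, β u := by
    intro s t hs hst
    simp only [hBdef]
    exact hsplit0 s t hs hst
  have hYadd : ∀ s t : ℝ, 0 ≤ s → s ≤ t →
      Y t = Y s + ∫ u in Set.Ioc s t, Y' u := by
    intro s t hs hst
    have h1 := hYac s hs
    have h2 := hYac t (hs.trans hst)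
    rw [intervalIntegral.integral_of_le hs] at h1
    rw [intervalIntegral.integral_of_le (hs.trans hst)] at h2
    have h3 : (∫ u in Set.Ioc 0 t, Y' u)
        = (∫ u in Set.Ioc 0 s, Y' u) + ∫ u in Set.Ioc s t, Y' u := by
      rw [← setIntegral_union (Set.Ioc_disjoint_Ioc_of_le le_rfl) measurableSet_Ioc
        (hY'I le_rfl) (hY'I hs), Set.Ioc_union_Ioc_eq_Ioc hs hst]
    linarith
  -- the key decay estimate
  have hdecay : ∀ s t : ℝ, 0 ≤ s → s ≤ t →
      Y t ≤ Y s * Real.exp (B s - B t) := by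
    intro s t hs hst
    have hBloc : ∀ u ∈ Set.Icc s t, B u = B s + ∫ v in Set.Ioc s u, β v :=
      fun u hu => hBadd s u hs hu.1
    have hYloc : ∀ u ∈ Set.Icc s t, Y u = Y s + ∫ v in Set.Ioc s u, Y' v :=
      fun u hu => hYadd s u hs hu.1
    have hE := ug_exp_rule (hβI hs) hBloc
    have hcontB := ug_contOn (hβI hs) hBloc
    obtain ⟨Cb, hCb0, hCb⟩ := ug_bddOn (hβI hs) hBloc
    have hcontE : ContinuousOn (fun u => Real.exp (B u)) (Set.Icc s t) :=
      Real.continuous_exp.comp_continuousOn hcontB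
    have hgE : IntegrableOn (fun u => β u * Real.exp (B u)) (Set.Ioc s t) := by
      refine ug_mul_bdd_integrable (hβI hs) hcontE (c := Real.exp Cb) fun u hu => ?_
      rw [abs_of_pos (Real.exp_pos _)]
      exact Real.exp_le_exp.2 ((le_abs_self _).trans (hCb u hu))
    have hprod := ug_prod_rule (hY'I hs) hgE hYloc hE t ⟨hst, le_rfl⟩
    have hneg : (∫ u in Set.Ioc s t,
        (Y' u * Real.exp (B u) + Y u * (β u * Real.exp (B u)))) ≤ 0 := by
      apply integral_nonpos_of_ae
      filter_upwards [ae_restrict_mem measurableSet_Ioc,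
        ae_restrict_of_ae (s := Set.Ioc s t) hODE] with u hu hODEu
      have h0u : 0 ≤ u := le_trans hs (le_of_lt hu.1)
      have heq : Y' u * Real.exp (B u) + Y u * (β u * Real.exp (B u))
          = (Y' u + β u * Y u) * Real.exp (B u) := by ring
      rw [heq]
      exact mul_nonpos_of_nonpos_of_nonneg (hODEu h0u) (Real.exp_pos _).le
    have hkey : Y t * Real.exp (B t) ≤ Y s * Real.exp (B s) := by linarith
    have hEt : (0:ℝ) < Real.exp (B t) := Real.exp_pos _
    rw [Real.exp_sub, show Y s * (Real.exp (B s) / Real.exp (B t))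
      = (Y s * Real.exp (B s)) / Real.exp (B t) by ring, le_div_iff₀ hEt]
    exact hkey
  -- asymptotic bookkeeping
  obtain ⟨M₀, hM⟩ := hlimsup
  obtain ⟨T₁, hT₁⟩ := eventually_atTop.1 ((hliminf (γ/2) (by positivity)).and hM)
  set M : ℝ := max M₀ 0 with hMdef
  set T : ℝ := max T₁ 0 with hTdef
  have hT0 : (0:ℝ) ≤ T := le_max_right _ _
  have hTT₁ : T₁ ≤ T := le_max_left _ _
  have hM0 : (0:ℝ) ≤ M := le_max_right _ _
  have hwin : ∀ s : ℝ, T ≤ s → γ/2 ≤ B (s + τ) - B s := by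
    intro s hsT
    have h := (hT₁ s (le_trans hTT₁ hsT)).1
    rw [intervalIntegral.integral_of_le (by linarith)] at h
    have h2 := hBadd s (s + τ) (le_trans hT0 hsT) (by linarith)
    linarith
  have htail : ∀ s t : ℝ, T ≤ s → s ≤ t → t ≤ s + τ → -M ≤ B t - B s := by
    intro s t hsT hst hts
    have h0s : 0 ≤ s := le_trans hT0 hsT
    have hβm : IntegrableOn (fun u => max (-β u) 0) (Set.Ioc s (s + τ)) :=
      (hβI h0s).neg.pos_part
    have hβm' : IntegrableOn (fun u => max (-β u) 0) (Set.Ioc s t) :=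
      hβm.mono (Set.Ioc_subset_Ioc le_rfl hts) le_rfl
    have h1 := hBadd s t h0s hst
    have h2 : -(∫ u in Set.Ioc s t, max (-β u) 0) ≤ ∫ u in Set.Ioc s t, β u := by
      rw [← integral_neg]
      refine integral_mono hβm'.neg (hβI h0s) fun u => ?_
      exact neg_le.mpr (le_max_left _ _)
    have h3 : (∫ u in Set.Ioc s t, max (-β u) 0)
        ≤ ∫ u in Set.Ioc s (s + τ), max (-β u) 0 := by
      refine setIntegral_mono_set hβm ?_ ?_
      · filter_upwards with u using le_max_right _ _
      · exact HasSubset.Subset.eventuallyLE (Set.Ioc_subset_Ioc le_rfl hts)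
    have h4 : (∫ u in Set.Ioc s (s + τ), max (-β u) 0) ≤ M := by
      have h5 := (hT₁ s (le_trans hTT₁ hsT)).2
      rw [intervalIntegral.integral_of_le (by linarith)] at h5
      exact h5.trans (le_max_left _ _)
    linarith
  have hstep : ∀ n : ℕ, (n : ℝ) * (γ/2) ≤ B (T + n * τ) - B T := by
    intro n
    induction n with
    | zero => simp
    | succ n ih =>
      have hTs : T ≤ T + n * τ := by
        have := mul_nonneg (Nat.cast_nonneg (α := ℝ) n) hτ.le
        linarith
      have hw := hwin (T + n * τ) hTs
      have heq : T + ((n : ℕ) + 1 : ℝ) * τ = (T + n * τ) + τ := by ring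
      push_cast
      rw [heq]
      push_cast at ih
      linarith
  -- final assembly
  set α : ℝ := γ / (2 * τ) with hαdef
  have hα : 0 < α := by positivity
  refine ⟨Y T * Real.exp (M + γ/2 + α * T) + 1, ?_, α, hα, T, hT0, ?_⟩
  · have := mul_nonneg (hYnonneg T hT0) (Real.exp_pos (M + γ/2 + α * T)).le
    linarith
  · intro t htT
    set n : ℕ := ⌊(t - T) / τ⌋₊ with hndef
    have hdivnn : 0 ≤ (t - T) / τ := div_nonneg (by linarith) hτ.le
    have hn1 : (n : ℝ) ≤ (t - T) / τ := Nat.floor_le hdivnn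
    have hn2 : (t - T) / τ < (n : ℝ) + 1 := Nat.lt_floor_add_one _
    rw [le_div_iff₀ hτ] at hn1
    rw [div_lt_iff₀ hτ] at hn2
    have hTs : T ≤ T + n * τ := by
      have := mul_nonneg (Nat.cast_nonneg (α := ℝ) n) hτ.le
      linarith
    have hs1 : T + n * τ ≤ t := by linarith
    have hs2 : t ≤ (T + n * τ) + τ := by linarith
    have hB1 := hstep n
    have hB2 := htail (T + n * τ) t hTs hs1 hs2
    -- B T - B t ≤ M + γ/2 + α T - α t
    have hBub : B T - B t ≤ M + γ/2 + α * T - α * t := by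
      have hfrac : α * (t - T) - γ/2 ≤ (n : ℝ) * (γ/2) := by
        have h6 : α * (t - T) ≤ ((n : ℝ) + 1) * (γ/2) := by
          rw [hαdef]
          rw [div_mul_eq_mul_div, div_le_iff₀ (by positivity)]
          nlinarith
        linarith
      have : α * (t - T) - γ/2 - M ≤ B t - B T := by linarith
      linarith
    have e1 := hdecay T t hT0 htT
    have e2 : Real.exp (B T - B t)
        ≤ Real.exp ((M + γ/2 + α * T) + (-α * t)) := by
      apply Real.exp_le_exp.2
      linarith
    calc Y t ≤ Y T * Real.exp (B T - B t) := e1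
      _ ≤ Y T * Real.exp ((M + γ/2 + α * T) + (-α * t)) :=
          mul_le_mul_of_nonneg_left e2 (hYnonneg T hT0)
      _ = (Y T * Real.exp (M + γ/2 + α * T)) * Real.exp (-α * t) := by
          rw [Real.exp_add]; ring
      _ ≤ (Y T * Real.exp (M + γ/2 + α * T) + 1) * Real.exp (-α * t) := by
          have := (Real.exp_pos (-α * t)).le
          nlinarith
end

section
/- Let H be a real inner product space with inner product ⟨·,·⟩ and norm ‖·‖. Let w, J, d ∈ H, let g ≥ 0 and D ≥ 0 be real numbers, and let μ, ν, c₀, h be positive real numbers. Assume ⟨w, d⟩ = g², ‖d‖ ≤ D, the interpolation error bound ‖J − w‖² ≤ (1/2)c₀²h²·g² + (1/4)c₀⁴h⁴·D², and μ c₀² h² ≤ ν. Then −μ⟨J, d⟩ ≤ (ν/2)·D² − (μ/2)·g². -/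
open RealInnerProductSpace

/-- Abstract estimate for the feedback-nudging term with type II interpolant
observables: if `⟨w, d⟩ = g²`, `‖d‖ ≤ D`,
`‖J - w‖² ≤ (1/2) c₀² h² g² + (1/4) c₀⁴ h⁴ D²`, and `μ c₀² h² ≤ ν`, then
`-μ⟨J, d⟩ ≤ (ν/2) D² - (μ/2) g²`. -/
theorem nudging_estimate_type_II
    {H : Type*} [NormedAddCommGroup H] [InnerProductSpace ℝ H]
    (w J d : H) (g D μ ν c₀ h : ℝ)
    (hg : 0 ≤ g) (hD : 0 ≤ D) (hμ : 0 < μ) (hν : 0 < ν) (hc₀ : 0 < c₀) (hh : 0 < h)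
    (hwd : ⟪w, d⟫ = g ^ 2)
    (hdD : ‖d‖ ≤ D)
    (happrox : ‖J - w‖ ^ 2 ≤ (1 / 2) * c₀ ^ 2 * h ^ 2 * g ^ 2
        + (1 / 4) * c₀ ^ 4 * h ^ 4 * D ^ 2)
    (hμh : μ * c₀ ^ 2 * h ^ 2 ≤ ν) :
    -μ * ⟪J, d⟫ ≤ ν / 2 * D ^ 2 - μ / 2 * g ^ 2 := by
  have h1 : ⟪J - w, d⟫ = ⟪J, d⟫ - g ^ 2 := by
    rw [inner_sub_left, hwd]
  have h2 : -⟪J - w, d⟫ ≤ ‖J - w‖ * ‖d‖ := by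
    have := abs_real_inner_le_norm (J - w) d
    cases' abs_le.mp this with hl hr
    linarith
  have h3 : ‖J - w‖ * ‖d‖ ≤ ‖J - w‖ * D :=
    mul_le_mul_of_nonneg_left hdD (norm_nonneg _)
  have hch : 0 < c₀ ^ 2 * h ^ 2 := by positivity
  have key : ‖J - w‖ * D ≤ (1/2) * g ^ 2 + (1/2) * c₀ ^ 2 * h ^ 2 * D ^ 2 := by
    have hsq := sq_nonneg (‖J - w‖ - c₀ ^ 2 * h ^ 2 / 2 * D)
    have hmul : c₀ ^ 2 * h ^ 2 * (‖J - w‖ * D) ≤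
        c₀ ^ 2 * h ^ 2 * ((1/2) * g ^ 2 + (1/2) * c₀ ^ 2 * h ^ 2 * D ^ 2) := by
      nlinarith [happrox, hsq]
    exact le_of_mul_le_mul_left hmul hch
  nlinarith [mul_le_mul_of_nonneg_left key (le_of_lt hμ), mul_le_mul_of_nonneg_right hμh (sq_nonneg D)]
end
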